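/- For every odd positive integer m, Σ_{n=1}^{∞} (ζ(2n)/(n·4^n)) · C(2n, m) = 1/m, where C(2n, m) denotes the binomial coefficient. -/

import Mathlib

open Real

/-- Real Riemann zeta values via the series `∑ 1/k^m`. -/
noncomputable def zetaR (m : ℕ) : ℝ := ∑' k : ℕ, 1 / ((k : ℝ) + 1) ^ m

lemma lemA (t : ℕ) (y : ℝ) (hy0 : 0 < y) (hy1 : y < 1) :
    HasSum (fun n : ℕ => ((2 * n + 1).choose (2 * t) : ℝ) * y ^ (2 * n + 2))
      (((y / (1 - y)) ^ (2 * t + 1) - (y / (1 + y)) ^ (2 * t + 1)) / 2) := by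
  have hy : ‖y‖ < 1 := by rw [Real.norm_eq_abs, abs_lt]; constructor <;> linarith
  have hy' : ‖-y‖ < 1 := by rwa [norm_neg]
  have h1 := (hasSum_choose_mul_geometric_of_norm_lt_one (𝕜 := ℝ) (2 * t) hy).mul_left
    (y ^ (2 * t + 1))
  have h2 := (hasSum_choose_mul_geometric_of_norm_lt_one (𝕜 := ℝ) (2 * t) hy').mul_left
    ((-y) ^ (2 * t + 1))
  have h1y : (1 : ℝ) - y ≠ 0 := by linarith
  have h2y : (1 : ℝ) + y ≠ 0 := by linarith
  have h3 := (h1.add h2).div_const 2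
  have hval : (y ^ (2 * t + 1) * (1 / (1 - y) ^ (2 * t + 1)) +
      (-y) ^ (2 * t + 1) * (1 / (1 - -y) ^ (2 * t + 1))) / 2 =
      ((y / (1 - y)) ^ (2 * t + 1) - (y / (1 + y)) ^ (2 * t + 1)) / 2 := by
    have ho : Odd (2 * t + 1) := odd_two_mul_add_one t
    rw [ho.neg_pow y, div_pow, div_pow]
    field_simp
    ring
  rw [hval] at h3
  set F : ℕ → ℝ := fun j =>
    (((j + 2 * t).choose (2 * t) : ℝ) * (y ^ (j + 2 * t + 1) + (-y) ^ (j + 2 * t + 1))) / 2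
    with hF
  have hfun : (fun j : ℕ => (y ^ (2 * t + 1) * (((j + 2 * t).choose (2 * t) : ℝ) * y ^ j) +
      (-y) ^ (2 * t + 1) * (((j + 2 * t).choose (2 * t) : ℝ) * (-y) ^ j)) / 2) = F := by
    funext j
    simp only [hF]
    rw [show j + 2 * t + 1 = j + (2 * t + 1) by omega, pow_add, pow_add]
    ring
  rw [hfun] at h3
  have hinj : Function.Injective (fun i : ℕ => 2 * i + 1) := by
    intro a b hab
    have : 2 * a + 1 = 2 * b + 1 := hab
    omega
  have hvan : ∀ j, j ∉ Set.range (fun i : ℕ => 2 * i + 1) → F j = 0 := by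
    intro j hj
    have hje : Even j := by
      rcases Nat.even_or_odd j with h | h
      · exact h
      · exfalso; obtain ⟨i, hi⟩ := h
        exact hj ⟨i, show 2 * i + 1 = j by omega⟩
    have hodd : Odd (j + 2 * t + 1) := by
      obtain ⟨i, hi⟩ := hje
      exact ⟨i + t, by omega⟩
    simp only [hF, hodd.neg_pow y]
    ring
  have h4 : HasSum (F ∘ fun i : ℕ => 2 * i + 1)
      (((y / (1 - y)) ^ (2 * t + 1) - (y / (1 + y)) ^ (2 * t + 1)) / 2) :=
    (hinj.hasSum_iff hvan).mpr h3
  set g : ℕ → ℝ := fun n => ((2 * n + 1).choose (2 * t) : ℝ) * y ^ (2 * n + 2) with hg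
  have h5 : (F ∘ fun i : ℕ => 2 * i + 1) = fun i => g (i + t) := by
    funext i
    have heven : Even (2 * i + 1 + 2 * t + 1) := ⟨i + t + 1, by omega⟩
    simp only [Function.comp_apply, hg, hF]
    rw [heven.neg_pow]
    have e1 : 2 * i + 1 + 2 * t = 2 * (i + t) + 1 := by omega
    rw [e1]
    ring
  rw [h5] at h4
  have h6 := (hasSum_nat_add_iff (f := g) t).mp h4
  have h7 : ∑ i ∈ Finset.range t, g i = 0 := by
    apply Finset.sum_eq_zero
    intro i hi
    rw [hg]
    have : (2 * i + 1).choose (2 * t) = 0 :=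
      Nat.choose_eq_zero_of_lt (by simp at hi; omega)
    simp [this]
  rw [h7, add_zero] at h6
  exact h6

theorem zeta_binom_four_odd (m : ℕ) (hm : Odd m) (hm0 : 0 < m) :
    ∑' n : ℕ, zetaR (2 * (n + 1)) / (((n : ℝ) + 1) * 4 ^ (n + 1)) *
      (Nat.choose (2 * (n + 1)) m : ℝ) = 1 / (m : ℝ) := by
  obtain ⟨t, rfl⟩ : ∃ t, m = 2 * t + 1 := by
    obtain ⟨s, hs⟩ := hm; exact ⟨s, by omega⟩
  set m : ℕ := 2 * t + 1 with hmdef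
  have hmR : (0 : ℝ) < (m : ℝ) := by positivity
  set a : ℕ → ℕ → ℝ := fun k n =>
    (2 / (m : ℝ)) * (((2 * n + 1).choose (2 * t) : ℝ) *
      (1 / (2 * ((k : ℝ) + 1))) ^ (2 * n + 2)) with ha
  set fk : ℕ → ℝ := fun k => 1 / (m : ℝ) * (1 / (2 * (k : ℝ) + 1) ^ m) with hfk
  -- per-k sum via lemA
  have hk : ∀ k : ℕ, HasSum (fun n => a k n) (fk k - fk (k + 1)) := by
    intro k
    have hk1 : (2 * (k : ℝ) + 1) ≠ 0 := by positivity
    have hk3 : (2 * (k : ℝ) + 3) ≠ 0 := by positivity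
    have hy0 : (0 : ℝ) < 1 / (2 * ((k : ℝ) + 1)) := by positivity
    have hy1 : 1 / (2 * ((k : ℝ) + 1)) < 1 := by
      rw [div_lt_one (by positivity)]
      have : (0 : ℝ) ≤ (k : ℝ) := Nat.cast_nonneg k
      linarith
    have hA := (lemA t _ hy0 hy1).mul_left (2 / (m : ℝ))
    have e1 : 1 / (2 * ((k : ℝ) + 1)) / (1 - 1 / (2 * ((k : ℝ) + 1))) =
        1 / (2 * (k : ℝ) + 1) := by
      rw [div_eq_div_iff]
      · field_simp
        ring
      · have h2 : (0:ℝ) < 2 * ((k : ℝ) + 1) := by positivity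
        have : 1 / (2 * ((k : ℝ) + 1)) < 1 := hy1
        intro hzero
        nlinarith [hy1]
      · exact hk1
    have e2 : 1 / (2 * ((k : ℝ) + 1)) / (1 + 1 / (2 * ((k : ℝ) + 1))) =
        1 / (2 * (k : ℝ) + 3) := by
      rw [div_eq_div_iff]
      · field_simp
        ring
      · positivity
      · exact hk3
    rw [e1, e2] at hA
    have hval : (2 / (m : ℝ)) * (((1 / (2 * (k : ℝ) + 1)) ^ m -
        (1 / (2 * (k : ℝ) + 3)) ^ m) / 2) = fk k - fk (k + 1) := by
      rw [hfk]
      push_cast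
      rw [one_div_pow, one_div_pow]
      ring
    rw [hval] at hA
    exact hA
  -- telescoping sum over k
  have hdec : ∀ k : ℕ, fk (k + 1) ≤ fk k := by
    intro k
    rw [hfk]
    push_cast
    apply mul_le_mul_of_nonneg_left _ (by positivity)
    apply one_div_le_one_div_of_le (by positivity)
    apply pow_le_pow_left₀ (by positivity)
    linarith
  have hfk0 : fk 0 = 1 / (m : ℝ) := by
    rw [hfk]; norm_num
  have hlim : Filter.Tendsto fk Filter.atTop (nhds 0) := by
    have h1 : Filter.Tendsto (fun k : ℕ => 2 * (k : ℝ) + 1) Filter.atTop Filter.atTop := by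
      apply Filter.tendsto_atTop_add_const_right
      exact (tendsto_natCast_atTop_atTop).const_mul_atTop two_pos
    have h2 : Filter.Tendsto (fun k : ℕ => (2 * (k : ℝ) + 1)⁻¹) Filter.atTop (nhds 0) :=
      h1.inv_tendsto_atTop
    have h3 : Filter.Tendsto (fun k : ℕ => ((2 * (k : ℝ) + 1)⁻¹) ^ m) Filter.atTop
        (nhds 0) := by
      have := h2.pow m
      rwa [zero_pow (by omega : m ≠ 0)] at this
    have h4 := h3.const_mul (1 / (m : ℝ))
    rw [mul_zero] at h4
    apply h4.congr
    intro k
    simp only [hfk, one_div, inv_pow]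
  have htel : HasSum (fun k => fk k - fk (k + 1)) (1 / (m : ℝ)) := by
    rw [hasSum_iff_tendsto_nat_of_nonneg (fun k => sub_nonneg.2 (hdec k))]
    have hps : ∀ n : ℕ, ∑ i ∈ Finset.range n, (fk i - fk (i + 1)) = fk 0 - fk n :=
      fun n => Finset.sum_range_sub' fk n
    simp only [hps]
    have h := (tendsto_const_nhds (x := fk 0) (f := Filter.atTop (α := ℕ))).sub hlim
    rw [sub_zero] at h
    rw [hfk0] at h
    convert h using 2
    rw [hfk0]
  -- summability of the double family
  have hAsum : Summable (Function.uncurry a) := by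
    apply (summable_prod_of_nonneg ?_).mpr
    · constructor
      · exact fun k => (hk k).summable
      · apply htel.summable.congr
        intro k
        exact ((hk k).tsum_eq).symm
    · intro p
      simp only [Function.uncurry, ha]
      positivity
  -- sum over k then n
  have hsum1 : ∑' (k : ℕ) (n : ℕ), a k n = 1 / (m : ℝ) := by
    rw [tsum_congr (fun k => (hk k).tsum_eq)]
    exact htel.tsum_eq
  -- per-n row sums
  have hrow : ∀ n : ℕ, ∑' k : ℕ, a k n =
      zetaR (2 * (n + 1)) / (((n : ℝ) + 1) * 4 ^ (n + 1)) *
        (Nat.choose (2 * (n + 1)) m : ℝ) := by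
    intro n
    have hp : ∀ k : ℕ, a k n =
        ((2 / (m : ℝ)) * ((2 * n + 1).choose (2 * t) : ℝ) * (1 / 4 ^ (n + 1))) *
          (1 / ((k : ℝ) + 1) ^ (2 * (n + 1))) := by
      intro k
      simp only [ha]
      have h4 : (2 : ℝ) ^ (2 * n + 2) = 4 ^ (n + 1) := by
        rw [show 2 * n + 2 = 2 * (n + 1) by ring, pow_mul]
        norm_num
      have hpow : (1 / (2 * ((k : ℝ) + 1))) ^ (2 * n + 2) =
          (1 / 4 ^ (n + 1)) * (1 / ((k : ℝ) + 1) ^ (2 * (n + 1))) := by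
        rw [div_pow, one_pow, mul_pow, h4, show 2 * (n + 1) = 2 * n + 2 by ring]
        rw [div_mul_div_comm, one_mul]
      rw [hpow]
      ring
    rw [tsum_congr hp, tsum_mul_left]
    have hz : (∑' k : ℕ, 1 / ((k : ℝ) + 1) ^ (2 * (n + 1))) = zetaR (2 * (n + 1)) := rfl
    rw [hz]
    have hch : ((2 * (n + 1)).choose m : ℝ) * (m : ℝ) =
        (2 * (n : ℝ) + 2) * ((2 * n + 1).choose (2 * t) : ℝ) := by
      have h := Nat.add_one_mul_choose_eq (2 * n + 1) (2 * t)
      rw [show 2 * n + 1 + 1 = 2 * (n + 1) by ring] at h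
      have h2 := congrArg (fun x : ℕ => (x : ℝ)) h
      simp only [hmdef]
      push_cast at h2 ⊢
      linarith
    have h4ne : ((4 : ℝ) ^ (n + 1)) ≠ 0 := by positivity
    have hn1 : ((n : ℝ) + 1) ≠ 0 := by positivity
    have hmne : (m : ℝ) ≠ 0 := ne_of_gt hmR
    field_simp
    linear_combination (-zetaR (2 * (n + 1))) * hch
  calc ∑' n : ℕ, zetaR (2 * (n + 1)) / (((n : ℝ) + 1) * 4 ^ (n + 1)) *
      (Nat.choose (2 * (n + 1)) m : ℝ)
      = ∑' (n : ℕ) (k : ℕ), a k n := (tsum_congr fun n => (hrow n).symm)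
    _ = ∑' (k : ℕ) (n : ℕ), a k n := Summable.tsum_comm hAsum
    _ = 1 / (m : ℝ) := hsum1
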